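/- For every vertex v of G, the following identity holds in the extended nonnegative reals: Σ_u deg(u) · q_last(u, v) = deg(v) · q_0(v) · Σ_{n≥0} p_{2n}(v, v), where the sum on the left is over all vertices u of G. -/

import Mathlib

open MeasureTheory
open scoped ENNReal Classical

namespace CollisionsStmt

variable {V : Type*}

/-- One-step transition probabilities of the simple random walk on `G`:
`p(u,v) = 1/deg u` if `v` is adjacent to `u`, and `0` otherwise. -/
noncomputable def step (G : SimpleGraph V) [G.LocallyFinite] (u v : V) : ℝ≥0∞ :=
  if G.Adj u v then ((G.degree u : ℝ≥0∞))⁻¹ else 0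

/-- The `n`-step transition probabilities of the simple random walk on `G`. -/
noncomputable def pn (G : SimpleGraph V) [G.LocallyFinite] : ℕ → V → V → ℝ≥0∞
  | 0, u, v => if u = v then 1 else 0
  | n + 1, u, v => ∑' w, step G u w * pn G n w v

/-- `μ` is the law (on path space, via the Ionescu–Tulcea trajectory construction) of
two independent walks with one-step transition probabilities `p`, started at `a` and `b`
respectively; equivalently, the Markov chain on `V × V` with kernel `p ⊗ p` started at `(a, b)`.
The law is characterized by being a probability measure with the prescribed
finite-dimensional (cylinder) distributions. -/
def IsPairWalkMeasure [MeasurableSpace V] (p : V → V → ℝ≥0∞) (a b : V)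
    (μ : Measure (ℕ → V × V)) : Prop :=
  IsProbabilityMeasure μ ∧
    ∀ (n : ℕ) (x : ℕ → V × V),
      μ {ω | ∀ i ≤ n, ω i = x i} =
        (if x 0 = (a, b) then (1 : ℝ≥0∞) else 0) *
          ∏ i ∈ Finset.range n, (p (x i).1 (x (i + 1)).1 * p (x i).2 (x (i + 1)).2)

/-- The event that the two walks do not collide at any time `n ≥ 1`. -/
def noCollision : Set (ℕ → V × V) := {ω | ∀ n ≥ 1, (ω n).1 ≠ (ω n).2}

/-- The event that the two walks have their last collision at the vertex `v`: for some
`n ≥ 0`, `X_n = Y_n = v` and `X_m ≠ Y_m` for all `m > n`. -/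
def lastCollisionAt (v : V) : Set (ℕ → V × V) :=
  {ω | ∃ n : ℕ, ω n = (v, v) ∧ ∀ m > n, (ω m).1 ≠ (ω m).2}

/-- The event that the two walks collide at only finitely many times. -/
def finCollisions : Set (ℕ → V × V) := {ω | {n : ℕ | (ω n).1 = (ω n).2}.Finite}

/-- The event that the two walks collide at infinitely many times. -/
def infCollisions : Set (ℕ → V × V) := {ω | {n : ℕ | (ω n).1 = (ω n).2}.Infinite}

/-- The event that the two walks never collide (including at time `0`). -/
def neverCollide : Set (ℕ → V × V) := {ω | ∀ n : ℕ, (ω n).1 ≠ (ω n).2}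

section alg
variable (G : SimpleGraph V) [G.LocallyFinite]

lemma step_tsum (hdeg : ∀ v : V, 0 < G.degree v) (u : V) : ∑' w, step G u w = 1 := by
  have h1 : ∑' w, step G u w = ∑ w ∈ G.neighborFinset u, step G u w := by
    refine tsum_eq_sum ?_
    intro w hw
    simp only [step, SimpleGraph.mem_neighborFinset] at hw ⊢
    simp [hw]
  rw [h1]
  have h2 : ∀ w ∈ G.neighborFinset u, step G u w = ((G.degree u : ℝ≥0∞))⁻¹ := by
    intro w hw
    simp only [SimpleGraph.mem_neighborFinset] at hw
    simp [step, hw]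
  rw [Finset.sum_congr rfl h2, Finset.sum_const, SimpleGraph.card_neighborFinset_eq_degree,
    nsmul_eq_mul]
  exact ENNReal.mul_inv_cancel (by exact_mod_cast (hdeg u).ne') (by simp)

lemma pn_le_one (hdeg : ∀ v : V, 0 < G.degree v) (n : ℕ) (u v : V) : pn G n u v ≤ 1 := by
  induction n generalizing u with
  | zero => simp [pn]; split <;> simp
  | succ n ih =>
    calc pn G (n+1) u v = ∑' w, step G u w * pn G n w v := rfl
    _ ≤ ∑' w, step G u w * 1 := ENNReal.tsum_le_tsum fun w => mul_le_mul_right (ih w) _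
    _ = 1 := by simpa using step_tsum G hdeg u

lemma pn_succ' (n : ℕ) (a b : V) : pn G (n + 1) a b = ∑' w, pn G n a w * step G w b := by
  induction n generalizing a with
  | zero =>
    show ∑' w, step G a w * pn G 0 w b = ∑' w, pn G 0 a w * step G w b
    rw [tsum_eq_single b (by intro c h; simp [pn, h]),
      tsum_eq_single a (by intro c h; simp [pn, Ne.symm h])]
    simp [pn]
  | succ n ih =>
    show ∑' w, step G a w * pn G (n+1) w b = _
    calc ∑' w, step G a w * pn G (n+1) w b
        = ∑' w, step G a w * ∑' x, pn G n w x * step G x b := by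
          simp_rw [fun w => ih w]
      _ = ∑' w, ∑' x, step G a w * (pn G n w x * step G x b) := by
          simp_rw [ENNReal.tsum_mul_left]
      _ = ∑' x, ∑' w, step G a w * (pn G n w x * step G x b) := ENNReal.tsum_comm
      _ = ∑' x, (∑' w, step G a w * pn G n w x) * step G x b := by
          congr 1; ext x; rw [← ENNReal.tsum_mul_right]; congr 1; ext w; ring
      _ = ∑' x, pn G (n+1) a x * step G x b := rfl

lemma pn_add (m k : ℕ) (a b : V) : pn G (m + k) a b = ∑' w, pn G m a w * pn G k w b := by
  induction k generalizing b with
  | zero =>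
    rw [tsum_eq_single b (by intro c h; simp [pn, h])]
    simp [pn]
  | succ k ih =>
    show pn G ((m + k) + 1) a b = _
    rw [pn_succ']
    calc ∑' x, pn G (m + k) a x * step G x b
        = ∑' x, (∑' w, pn G m a w * pn G k w x) * step G x b := by simp_rw [ih]
      _ = ∑' x, ∑' w, pn G m a w * pn G k w x * step G x b := by
          simp_rw [ENNReal.tsum_mul_right]
      _ = ∑' w, ∑' x, pn G m a w * pn G k w x * step G x b := ENNReal.tsum_comm
      _ = ∑' w, pn G m a w * ∑' x, pn G k w x * step G x b := by
          congr 1; ext w; rw [← ENNReal.tsum_mul_left]; congr 1; ext x; ring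
      _ = ∑' w, pn G m a w * pn G (k + 1) w b := by simp_rw [pn_succ']

lemma deg_mul_pn (hdeg : ∀ v : V, 0 < G.degree v) (n : ℕ) (u v : V) :
    (G.degree u : ℝ≥0∞) * pn G n u v = (G.degree v : ℝ≥0∞) * pn G n v u := by
  induction n generalizing u v with
  | zero =>
    by_cases h : u = v
    · subst h; rfl
    · simp [pn, h, Ne.symm h]
  | succ n ih =>
    have key : ∀ x y : V, (G.degree x : ℝ≥0∞) * step G x y = (G.degree y : ℝ≥0∞) * step G y x := by
      intro x y
      simp only [step]
      by_cases h : G.Adj x y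
      · rw [if_pos h, if_pos h.symm,
          ENNReal.mul_inv_cancel (by exact_mod_cast (hdeg x).ne') (by simp),
          ENNReal.mul_inv_cancel (by exact_mod_cast (hdeg y).ne') (by simp)]
      · rw [if_neg h, if_neg (fun hs => h hs.symm)]; simp
    calc (G.degree u : ℝ≥0∞) * pn G (n+1) u v
        = ∑' w, ((G.degree u : ℝ≥0∞) * step G u w) * pn G n w v := by
          rw [show pn G (n+1) u v = ∑' w, step G u w * pn G n w v from rfl,
            ← ENNReal.tsum_mul_left]; simp_rw [mul_assoc]
      _ = ∑' w, step G w u * ((G.degree w : ℝ≥0∞) * pn G n w v) := by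
          congr 1; ext w; rw [key u w]; ring
      _ = ∑' w, step G w u * ((G.degree v : ℝ≥0∞) * pn G n v w) := by
          simp_rw [fun w => ih w v]
      _ = (G.degree v : ℝ≥0∞) * ∑' w, pn G n v w * step G w u := by
          rw [← ENNReal.tsum_mul_left]; congr 1; ext w; ring
      _ = (G.degree v : ℝ≥0∞) * pn G (n+1) v u := by rw [pn_succ']

lemma deg_mul_pn_sq (hdeg : ∀ v : V, 0 < G.degree v) (n : ℕ) (v : V) :
    ∑' u, (G.degree u : ℝ≥0∞) * (pn G n u v * pn G n u v)
      = (G.degree v : ℝ≥0∞) * pn G (n + n) v v := by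
  calc ∑' u, (G.degree u : ℝ≥0∞) * (pn G n u v * pn G n u v)
      = ∑' u, ((G.degree u : ℝ≥0∞) * pn G n u v) * pn G n u v := by
        congr 1; ext u; ring
    _ = ∑' u, ((G.degree v : ℝ≥0∞) * pn G n v u) * pn G n u v := by
        simp_rw [fun u => deg_mul_pn G hdeg n u v]
    _ = (G.degree v : ℝ≥0∞) * ∑' u, pn G n v u * pn G n u v := by
        rw [← ENNReal.tsum_mul_left]; congr 1; ext u; ring
    _ = _ := by rw [pn_add]

end alg

noncomputable def cylProb (G : SimpleGraph V) [G.LocallyFinite] (a b : V)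
    (x : ℕ → V × V) (n : ℕ) : ℝ≥0∞ :=
  (if x 0 = (a, b) then (1 : ℝ≥0∞) else 0) *
    ∏ i ∈ Finset.range n, (step G (x i).1 (x (i + 1)).1 * step G (x i).2 (x (i + 1)).2)

/-- Extend a finite path to an infinite one, constant after time `M`. -/
def extend (M : ℕ) (y : Fin (M + 1) → V × V) : ℕ → V × V :=
  fun i => y ⟨min i M, Nat.lt_succ_of_le (Nat.min_le_right _ _)⟩

lemma extend_of_le {M i : ℕ} (h : i ≤ M) (y : Fin (M + 1) → V × V) :
    extend M y i = y ⟨i, Nat.lt_succ_of_le h⟩ := by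
  simp [extend, Nat.min_eq_left h]


lemma extend_cons_zero (M : ℕ) (c : V × V) (t : Fin (M + 1) → V × V) :
    extend (M + 1) (Fin.cons c t) 0 = c := by
  simp [extend]

lemma extend_cons_succ (M : ℕ) (c : V × V) (t : Fin (M + 1) → V × V) (i : ℕ) :
    extend (M + 1) (Fin.cons c t) (i + 1) = extend M t i := by
  unfold extend
  have h : (⟨min (i + 1) (M + 1), Nat.lt_succ_of_le (Nat.min_le_right _ _)⟩ : Fin (M + 1 + 1))
      = Fin.succ ⟨min i M, Nat.lt_succ_of_le (Nat.min_le_right _ _)⟩ := by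
    ext
    simp [Nat.succ_min_succ]
  rw [h, Fin.cons_succ]


section meas
variable [Countable V] [MeasurableSpace V] [DiscreteMeasurableSpace V]
variable (G : SimpleGraph V) [G.LocallyFinite]

lemma measurable_coord_eq (i : ℕ) (c : V × V) :
    MeasurableSet {ω : ℕ → V × V | ω i = c} := by
  have : {ω : ℕ → V × V | ω i = c} = (fun ω : ℕ → V × V => ω i) ⁻¹' {c} := rfl
  rw [this]
  exact measurable_pi_apply i (measurableSet_singleton c)

lemma measurable_VV (s : Set (V × V)) : MeasurableSet s :=
  (Set.to_countable s).measurableSet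

lemma measurable_coord_mem (i : ℕ) (s : Set (V × V)) :
    MeasurableSet {ω : ℕ → V × V | ω i ∈ s} := by
  have : {ω : ℕ → V × V | ω i ∈ s} = (fun ω : ℕ → V × V => ω i) ⁻¹' s := rfl
  rw [this]
  exact measurable_pi_apply i (measurable_VV s)

/-- Finite-dimensional law: the measure of an event depending only on the first `M+1`
coordinates is the sum of cylinder probabilities. -/
lemma measure_cylEvent {M : ℕ} {Q : (ℕ → V × V) → Prop}
    (hQ : ∀ ω ω' : ℕ → V × V, (∀ i ≤ M, ω i = ω' i) → Q ω → Q ω')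
    {a b : V} {μ : Measure (ℕ → V × V)} (hμ : IsPairWalkMeasure (step G) a b μ) :
    μ {ω | Q ω} =
      ∑' y : Fin (M + 1) → V × V,
        if Q (extend M y) then cylProb G a b (extend M y) M else 0 := by
  classical
  have hC : ∀ y : Fin (M + 1) → V × V, MeasurableSet
      (if Q (extend M y) then {ω : ℕ → V × V | ∀ i ≤ M, ω i = extend M y i} else ∅) := by
    intro y
    by_cases h : Q (extend M y)
    · rw [if_pos h]
      have : {ω : ℕ → V × V | ∀ i ≤ M, ω i = extend M y i}
          = ⋂ i, ⋂ (_ : i ≤ M), {ω : ℕ → V × V | ω i = extend M y i} := by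
        ext ω; simp
      rw [this]
      exact MeasurableSet.iInter fun i => MeasurableSet.iInter fun _ =>
        measurable_coord_eq i _
    · rw [if_neg h]; exact MeasurableSet.empty
  have hdisj : Pairwise (Function.onFun Disjoint fun y : Fin (M + 1) → V × V =>
      if Q (extend M y) then {ω : ℕ → V × V | ∀ i ≤ M, ω i = extend M y i} else ∅) := by
    intro y y' hne
    simp only [Function.onFun, Set.disjoint_left]
    intro ω hω hω'
    by_cases h : Q (extend M y)
    · rw [if_pos h] at hω
      by_cases h' : Q (extend M y')
      · rw [if_pos h'] at hω'
        apply hne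
        funext i
        have h1 := hω i.1 (Nat.lt_succ_iff.mp i.2)
        have h2 := hω' i.1 (Nat.lt_succ_iff.mp i.2)
        rw [extend_of_le (Nat.lt_succ_iff.mp i.2)] at h1 h2
        exact h1.symm.trans h2
      · rw [if_neg h'] at hω'; exact hω'
    · rw [if_neg h] at hω; exact hω
  have hunion : (⋃ y : Fin (M + 1) → V × V,
      if Q (extend M y) then {ω : ℕ → V × V | ∀ i ≤ M, ω i = extend M y i} else ∅)
      = {ω | Q ω} := by
    ext ω
    simp only [Set.mem_iUnion, Set.mem_setOf_eq]
    constructor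
    · rintro ⟨y, hω⟩
      by_cases h : Q (extend M y)
      · rw [if_pos h] at hω
        exact hQ _ _ (fun i hi => (hω i hi).symm) h
      · rw [if_neg h] at hω; exact hω.elim
    · intro hω
      refine ⟨fun i => ω i.1, ?_⟩
      have hagree : ∀ i ≤ M, ω i = extend M (fun i : Fin (M+1) => ω i.1) i := by
        intro i hi
        rw [extend_of_le hi]
      rw [if_pos (hQ _ _ hagree hω)]
      exact hagree
  calc μ {ω | Q ω} = μ (⋃ y : Fin (M + 1) → V × V,
        if Q (extend M y) then {ω : ℕ → V × V | ∀ i ≤ M, ω i = extend M y i} else ∅) := by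
        rw [hunion]
    _ = ∑' y : Fin (M + 1) → V × V, μ
        (if Q (extend M y) then {ω : ℕ → V × V | ∀ i ≤ M, ω i = extend M y i} else ∅) :=
        measure_iUnion hdisj hC
    _ = _ := by
        congr 1; funext y
        by_cases h : Q (extend M y)
        · rw [if_pos h, if_pos h, cylProb]
          exact hμ.2 M (extend M y)
        · rw [if_neg h, if_neg h, measure_empty]

end meas

def evA (v : V) (n N : ℕ) : Set (ℕ → V × V) :=
  {ω | ω n = (v, v) ∧ ∀ m, n < m → m ≤ N + n → (ω m).1 ≠ (ω m).2}

def evB (v : V) (N : ℕ) : Set (ℕ → V × V) :=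
  {ω | ∀ m, 1 ≤ m → m ≤ N → (ω m).1 ≠ (ω m).2}

section claims
variable (G : SimpleGraph V) [G.LocallyFinite]

noncomputable def bodyA (v : V) (N n : ℕ) (t : Fin (N + n + 1) → V × V) : ℝ≥0∞ :=
  if extend (N + n) t ∈ evA v n N then
    ∏ i ∈ Finset.range (N + n),
      (step G (extend (N + n) t i).1 (extend (N + n) t (i + 1)).1 *
        step G (extend (N + n) t i).2 (extend (N + n) t (i + 1)).2)
  else 0

noncomputable def FA (v : V) (N n : ℕ) (d : V × V) (t : Fin (N + n + 1) → V × V) : ℝ≥0∞ :=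
  if extend (N + n) t ∈ evA v n N then cylProb G d.1 d.2 (extend (N + n) t) (N + n) else 0

lemma FA_eq (v : V) (N n : ℕ) (d : V × V) (t : Fin (N + n + 1) → V × V) :
    FA G v N n d t = (if extend (N + n) t 0 = d then 1 else 0) * bodyA G v N n t := by
  unfold FA bodyA cylProb
  rw [mul_ite, mul_zero]

lemma evA_cons (v : V) (N n : ℕ) (c : V × V) (t : Fin (N + n + 1) → V × V) :
    extend (N + (n + 1)) (Fin.cons c t) ∈ evA v (n + 1) N
      ↔ extend (N + n) t ∈ evA v n N := by
  have key : ∀ i : ℕ, extend (N + (n + 1)) (Fin.cons c t) (i + 1) = extend (N + n) t i :=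
    fun i => extend_cons_succ (N + n) c t i
  constructor
  · rintro ⟨h1, h2⟩
    rw [key n] at h1
    refine ⟨h1, fun m hm hm' => ?_⟩
    have := h2 (m + 1) (by omega) (by omega)
    rwa [key m] at this
  · rintro ⟨h1, h2⟩
    refine ⟨by rw [key n]; exact h1, fun m hm hm' => ?_⟩
    obtain ⟨m', rfl⟩ : ∃ m', m = m' + 1 := ⟨m - 1, by omega⟩
    rw [key m']
    exact h2 m' (by omega) (by omega)

lemma prodsplit (M : ℕ) (c : V × V) (t : Fin (M + 1) → V × V) :
    ∏ i ∈ Finset.range (M + 1),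
      (step G (extend (M + 1) (Fin.cons c t) i).1 (extend (M + 1) (Fin.cons c t) (i + 1)).1 *
        step G (extend (M + 1) (Fin.cons c t) i).2 (extend (M + 1) (Fin.cons c t) (i + 1)).2)
    = (step G c.1 (extend M t 0).1 * step G c.2 (extend M t 0).2) *
      ∏ i ∈ Finset.range M,
        (step G (extend M t i).1 (extend M t (i + 1)).1 *
          step G (extend M t i).2 (extend M t (i + 1)).2) := by
  rw [Finset.prod_range_succ']
  have e0 : extend (M + 1) (Fin.cons c t) 0 = c := extend_cons_zero M c t
  have e1 : ∀ i : ℕ, extend (M + 1) (Fin.cons c t) (i + 1) = extend M t i :=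
    extend_cons_succ M c t
  have e2 : extend (M + 1) (Fin.cons c t) 1 = extend M t 0 := e1 0
  simp only [e1, e0, e2]
  ring

lemma bodyA_cons (v : V) (N n : ℕ) (c : V × V) (t : Fin (N + n + 1) → V × V) :
    bodyA G v N (n + 1) (Fin.cons c t)
      = (step G c.1 (extend (N + n) t 0).1 * step G c.2 (extend (N + n) t 0).2)
        * bodyA G v N n t := by
  have lhs_eq : bodyA G v N (n + 1) (Fin.cons c t)
      = if extend (N + (n + 1)) (Fin.cons c t) ∈ evA v (n + 1) N then
          ∏ i ∈ Finset.range (N + n + 1),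
            (step G (extend (N + n + 1) (Fin.cons c t) i).1
                (extend (N + n + 1) (Fin.cons c t) (i + 1)).1 *
              step G (extend (N + n + 1) (Fin.cons c t) i).2
                (extend (N + n + 1) (Fin.cons c t) (i + 1)).2)
        else 0 := rfl
  rw [lhs_eq]
  unfold bodyA
  rw [mul_ite, mul_zero]
  by_cases h : extend (N + n) t ∈ evA v n N
  · rw [if_pos ((evA_cons v N n c t).mpr h), if_pos h]
    exact prodsplit G (N + n) c t
  · rw [if_neg (fun hh => h ((evA_cons v N n c t).mp hh)), if_neg h]

lemma FA_cons (v : V) (N n : ℕ) (d c : V × V) (t : Fin (N + n + 1) → V × V) :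
    FA G v N (n + 1) d (Fin.cons c t)
      = (if c = d then 1 else 0) *
        ((step G c.1 (extend (N + n) t 0).1 * step G c.2 (extend (N + n) t 0).2)
          * bodyA G v N n t) := by
  have h1 : FA G v N (n + 1) d (Fin.cons c t)
      = (if extend (N + (n + 1)) (Fin.cons c t) 0 = d then 1 else 0)
        * bodyA G v N (n + 1) (Fin.cons c t) := FA_eq G v N (n + 1) d (Fin.cons c t)
  have h0 : extend (N + (n + 1)) (Fin.cons c t) 0 = c := extend_cons_zero (N + n) c t
  rw [h1, h0, bodyA_cons]

lemma claim_induction (v : V) (N : ℕ) :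
    ∀ n (d : V × V),
      (∑' t : Fin (N + n + 1) → V × V, FA G v N n d t)
        = pn G n d.1 v * pn G n d.2 v *
          ∑' w : Fin (N + 1) → V × V,
            if extend N w ∈ evB v N then cylProb G v v (extend N w) N else 0 := by
  intro n
  induction n with
  | zero =>
    intro d
    have key : ∀ t : Fin (N + 1) → V × V,
        FA G v N 0 d t = (if d = (v, v) then 1 else 0) *
          (if extend N t ∈ evB v N then cylProb G v v (extend N t) N else 0) := by
      intro t
      have h1 : FA G v N 0 d t
          = (if extend N t 0 = d then 1 else 0) * bodyA G v N 0 t := FA_eq G v N 0 d t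
      have h2 : bodyA G v N 0 t
          = if extend N t ∈ evA v 0 N then
              ∏ i ∈ Finset.range N,
                (step G (extend N t i).1 (extend N t (i + 1)).1 *
                  step G (extend N t i).2 (extend N t (i + 1)).2)
            else 0 := rfl
      have hiff : extend N t ∈ evA v 0 N ↔ extend N t 0 = (v, v) ∧ extend N t ∈ evB v N := by
        constructor
        · rintro ⟨ha, hb⟩
          exact ⟨ha, fun m hm hm' => hb m hm (by omega)⟩
        · rintro ⟨ha, hb⟩
          exact ⟨ha, fun m hm hm' => hb m hm (by omega)⟩
      rw [h1, h2, if_congr hiff rfl rfl]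
      unfold cylProb
      by_cases h0 : extend N t 0 = (v, v)
      · by_cases hB : extend N t ∈ evB v N
        · have hAB : extend N t 0 = (v, v) ∧ extend N t ∈ evB v N := ⟨h0, hB⟩
          rw [if_pos hAB, if_pos hB, if_pos h0, one_mul]
          congr 1
          rw [h0]
          by_cases hd : d = (v, v)
          · rw [if_pos hd.symm, if_pos hd]
          · rw [if_neg (fun h => hd h.symm), if_neg hd]
        · have hAB : ¬(extend N t 0 = (v, v) ∧ extend N t ∈ evB v N) := fun h => hB h.2
          rw [if_neg hAB, if_neg hB, mul_zero, mul_zero]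
      · have hAB : ¬(extend N t 0 = (v, v) ∧ extend N t ∈ evB v N) := fun h => h0 h.1
        rw [if_neg hAB, mul_zero, if_neg h0, zero_mul, ite_self, mul_zero]
    calc (∑' t : Fin (N + 0 + 1) → V × V, FA G v N 0 d t)
        = ∑' t : Fin (N + 1) → V × V, (if d = (v, v) then 1 else 0) *
            (if extend N t ∈ evB v N then cylProb G v v (extend N t) N else 0) :=
          tsum_congr key
      _ = (if d = (v, v) then 1 else 0) *
            ∑' w : Fin (N + 1) → V × V,
              (if extend N w ∈ evB v N then cylProb G v v (extend N w) N else 0) :=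
          ENNReal.tsum_mul_left
      _ = pn G 0 d.1 v * pn G 0 d.2 v *
            ∑' w : Fin (N + 1) → V × V,
              (if extend N w ∈ evB v N then cylProb G v v (extend N w) N else 0) := by
          congr 1
          show (if d = (v, v) then (1 : ℝ≥0∞) else 0)
            = (if d.1 = v then 1 else 0) * (if d.2 = v then 1 else 0)
          by_cases h1 : d.1 = v <;> by_cases h2 : d.2 = v
          · rw [if_pos (Prod.ext h1 h2)]; simp [h1, h2]
          · rw [if_neg (fun h => h2 (by rw [h]))]; simp [h2]
          · rw [if_neg (fun h => h1 (by rw [h]))]; simp [h1]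
          · rw [if_neg (fun h => h1 (by rw [h]))]; simp [h1]
  | succ n ih =>
    intro d
    calc (∑' t : Fin (N + n + 1 + 1) → V × V, FA G v N (n + 1) d t)
        = ∑' z : (V × V) × (Fin (N + n + 1) → V × V), FA G v N (n + 1) d (Fin.cons z.1 z.2) :=
          by
          rw [← Equiv.tsum_eq (Fin.consEquiv (fun _ : Fin (N + n + 1 + 1) => V × V))
            (FA G v N (n + 1) d)]
          exact tsum_congr fun z => rfl
      _ = ∑' c : V × V, ∑' t : Fin (N + n + 1) → V × V, FA G v N (n + 1) d (Fin.cons c t) :=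
          ENNReal.tsum_prod (f := fun c t => FA G v N (n + 1) d (Fin.cons c t))
      _ = ∑' c : V × V, ∑' t : Fin (N + n + 1) → V × V,
            (if c = d then 1 else 0) *
              ((step G c.1 (extend (N + n) t 0).1 * step G c.2 (extend (N + n) t 0).2)
                * bodyA G v N n t) :=
          tsum_congr fun c => tsum_congr fun t => FA_cons G v N n d c t
      _ = ∑' t : Fin (N + n + 1) → V × V,
            (step G d.1 (extend (N + n) t 0).1 * step G d.2 (extend (N + n) t 0).2)
              * bodyA G v N n t := by
          rw [tsum_eq_single d (fun c hc => by simp [hc])]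
          simp
      _ = ∑' t : Fin (N + n + 1) → V × V, ∑' w : V × V,
            (if extend (N + n) t 0 = w then 1 else 0) *
              ((step G d.1 w.1 * step G d.2 w.2) * bodyA G v N n t) := by
          refine tsum_congr fun t => ?_
          rw [tsum_eq_single (extend (N + n) t 0)
            (fun w hw => by rw [if_neg (fun h => hw h.symm), zero_mul])]
          simp
      _ = ∑' w : V × V, ∑' t : Fin (N + n + 1) → V × V,
            (if extend (N + n) t 0 = w then 1 else 0) *
              ((step G d.1 w.1 * step G d.2 w.2) * bodyA G v N n t) := ENNReal.tsum_comm
      _ = ∑' w : V × V, (step G d.1 w.1 * step G d.2 w.2) *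
            ∑' t : Fin (N + n + 1) → V × V, FA G v N n w t := by
          refine tsum_congr fun w => ?_
          rw [← ENNReal.tsum_mul_left]
          refine tsum_congr fun t => ?_
          rw [FA_eq]
          ring
      _ = ∑' w : V × V, (step G d.1 w.1 * step G d.2 w.2) *
            (pn G n w.1 v * pn G n w.2 v *
              ∑' w' : Fin (N + 1) → V × V,
                (if extend N w' ∈ evB v N then cylProb G v v (extend N w') N else 0)) :=
          tsum_congr fun w => by rw [ih w]
      _ = pn G (n + 1) d.1 v * pn G (n + 1) d.2 v *
            ∑' w' : Fin (N + 1) → V × V,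
              (if extend N w' ∈ evB v N then cylProb G v v (extend N w') N else 0) := by
          set SB := ∑' w' : Fin (N + 1) → V × V,
            (if extend N w' ∈ evB v N then cylProb G v v (extend N w') N else 0) with hSB
          calc ∑' w : V × V, (step G d.1 w.1 * step G d.2 w.2) *
                (pn G n w.1 v * pn G n w.2 v * SB)
              = ∑' w1 : V, ∑' w2 : V, (step G d.1 w1 * pn G n w1 v) *
                  ((step G d.2 w2 * pn G n w2 v) * SB) :=
                (ENNReal.tsum_prod (f := fun w1 w2 => step G d.1 w1 * step G d.2 w2 *
                  (pn G n w1 v * pn G n w2 v * SB))).trans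
                  (tsum_congr fun w1 => tsum_congr fun w2 => by ring)
            _ = ∑' w1 : V, (step G d.1 w1 * pn G n w1 v) *
                  ((∑' w2 : V, step G d.2 w2 * pn G n w2 v) * SB) := by
                refine tsum_congr fun w1 => ?_
                rw [ENNReal.tsum_mul_left, ENNReal.tsum_mul_right]
            _ = (∑' w1 : V, step G d.1 w1 * pn G n w1 v) *
                  ((∑' w2 : V, step G d.2 w2 * pn G n w2 v) * SB) := ENNReal.tsum_mul_right
            _ = pn G (n + 1) d.1 v * pn G (n + 1) d.2 v * SB := by
                rw [mul_assoc]
                rfl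

end claims

section final
variable [Countable V] [MeasurableSpace V] [DiscreteMeasurableSpace V]
variable (G : SimpleGraph V) [G.LocallyFinite]

/-- Last collision exactly at time `n`, at `(v, v)`. -/
def Alast (v : V) (n : ℕ) : Set (ℕ → V × V) :=
  {ω | ω n = (v, v) ∧ ∀ m, n < m → (ω m).1 ≠ (ω m).2}

lemma measurable_evA (v : V) (n N : ℕ) : MeasurableSet (evA v n N : Set (ℕ → V × V)) := by
  have h : (evA v n N : Set (ℕ → V × V)) = {ω : ℕ → V × V | ω n = (v, v)} ∩
      ⋂ m, ⋂ (_ : n < m), ⋂ (_ : m ≤ N + n),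
        {ω : ℕ → V × V | ω m ∈ {q : V × V | q.1 ≠ q.2}} := by
    ext ω
    simp only [evA, Set.mem_setOf_eq, Set.mem_inter_iff, Set.mem_iInter]
  rw [h]
  exact (measurable_coord_eq n _).inter (MeasurableSet.iInter fun m =>
    MeasurableSet.iInter fun _ => MeasurableSet.iInter fun _ => measurable_coord_mem m _)

lemma measurable_evB (v : V) (N : ℕ) : MeasurableSet (evB v N : Set (ℕ → V × V)) := by
  have h : (evB v N : Set (ℕ → V × V)) =
      ⋂ m, ⋂ (_ : 1 ≤ m), ⋂ (_ : m ≤ N),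
        {ω : ℕ → V × V | ω m ∈ {q : V × V | q.1 ≠ q.2}} := by
    ext ω
    simp only [evB, Set.mem_setOf_eq, Set.mem_iInter]
  rw [h]
  exact MeasurableSet.iInter fun m =>
    MeasurableSet.iInter fun _ => MeasurableSet.iInter fun _ => measurable_coord_mem m _

lemma measurable_Alast (v : V) (n : ℕ) : MeasurableSet (Alast v n : Set (ℕ → V × V)) := by
  have h : (Alast v n : Set (ℕ → V × V)) = {ω : ℕ → V × V | ω n = (v, v)} ∩
      ⋂ m, ⋂ (_ : n < m), {ω : ℕ → V × V | ω m ∈ {q : V × V | q.1 ≠ q.2}} := by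
    ext ω
    simp only [Alast, Set.mem_setOf_eq, Set.mem_inter_iff, Set.mem_iInter]
  rw [h]
  exact (measurable_coord_eq n _).inter (MeasurableSet.iInter fun m =>
    MeasurableSet.iInter fun _ => measurable_coord_mem m _)

lemma measure_evA_eq (v u : V) (n N : ℕ) {μu μv : Measure (ℕ → V × V)}
    (hμu : IsPairWalkMeasure (step G) u u μu) (hμv : IsPairWalkMeasure (step G) v v μv) :
    μu (evA v n N) = pn G n u v * pn G n u v * μv (evB v N) := by
  have h1 : μu (evA v n N) = ∑' t : Fin (N + n + 1) → V × V, FA G v N n (u, u) t := by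
    have key := measure_cylEvent (G := G) (M := N + n) (Q := fun ω => ω ∈ evA v n N)
      (fun ω ω' hagree hω => ⟨by rw [← hagree n (by omega)]; exact hω.1,
        fun m hm hm' => by rw [← hagree m (by omega)]; exact hω.2 m hm hm'⟩) hμu
    exact key
  have h2 : μv (evB v N) = ∑' w : Fin (N + 1) → V × V,
      if extend N w ∈ evB v N then cylProb G v v (extend N w) N else 0 := by
    have key := measure_cylEvent (G := G) (M := N) (Q := fun ω => ω ∈ evB v N)
      (fun ω ω' hagree hω m hm hm' => by rw [← hagree m (by omega)]; exact hω m hm hm') hμv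
    exact key
  calc μu (evA v n N) = ∑' t : Fin (N + n + 1) → V × V, FA G v N n (u, u) t := h1
    _ = pn G n (u, u).1 v * pn G n (u, u).2 v *
        ∑' w : Fin (N + 1) → V × V,
          (if extend N w ∈ evB v N then cylProb G v v (extend N w) N else 0) :=
      claim_induction G v N n (u, u)
    _ = pn G n u v * pn G n u v * μv (evB v N) := by rw [← h2]

lemma Alast_iInter (v : V) (n : ℕ) :
    (Alast v n : Set (ℕ → V × V)) = ⋂ N, evA v n N := by
  ext ω
  simp only [Alast, evA, Set.mem_setOf_eq, Set.mem_iInter]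
  constructor
  · rintro ⟨h1, h2⟩ N
    exact ⟨h1, fun m hm hm' => h2 m hm⟩
  · intro h
    exact ⟨(h 0).1, fun m hm => (h m).2 m hm (by omega)⟩

lemma noCollision_iInter (v : V) :
    (noCollision : Set (ℕ → V × V)) = ⋂ N, evB v N := by
  ext ω
  simp only [noCollision, evB, Set.mem_setOf_eq, Set.mem_iInter]
  constructor
  · intro h N m hm hm'
    exact h m hm
  · intro h m hm
    exact (h m) m hm le_rfl

lemma measure_Alast_eq (hdeg : ∀ w : V, 0 < G.degree w) (v u : V) (n : ℕ)
    {μu μv : Measure (ℕ → V × V)}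
    (hμu : IsPairWalkMeasure (step G) u u μu) (hμv : IsPairWalkMeasure (step G) v v μv) :
    μu (Alast v n) = pn G n u v * pn G n u v * μv noCollision := by
  haveI : IsProbabilityMeasure μu := hμu.1
  haveI : IsProbabilityMeasure μv := hμv.1
  have hmonoA : Antitone (fun N => (evA v n N : Set (ℕ → V × V))) := by
    intro N N' h ω hω
    exact ⟨hω.1, fun m hm hm' => hω.2 m hm (by omega)⟩
  have hmonoB : Antitone (fun N => (evB v N : Set (ℕ → V × V))) := by
    intro N N' h ω hω m hm hm'
    exact hω m hm (by omega)
  have h1 : μu (Alast v n) = ⨅ N, μu (evA v n N) := by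
    rw [Alast_iInter]
    exact hmonoA.measure_iInter
      (fun N => (measurable_evA v n N).nullMeasurableSet)
      ⟨0, measure_ne_top _ _⟩
  have h2 : μv noCollision = ⨅ N, μv (evB v N) := by
    rw [noCollision_iInter v]
    exact hmonoB.measure_iInter
      (fun N => (measurable_evB v N).nullMeasurableSet)
      ⟨0, measure_ne_top _ _⟩
  have hne : pn G n u v * pn G n u v ≠ ⊤ :=
    (ENNReal.mul_lt_top (lt_of_le_of_lt (pn_le_one G hdeg n u v) ENNReal.one_lt_top)
      (lt_of_le_of_lt (pn_le_one G hdeg n u v) ENNReal.one_lt_top)).ne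
  calc μu (Alast v n) = ⨅ N, μu (evA v n N) := h1
    _ = ⨅ N, pn G n u v * pn G n u v * μv (evB v N) :=
        iInf_congr fun N => measure_evA_eq G v u n N hμu hμv
    _ = pn G n u v * pn G n u v * ⨅ N, μv (evB v N) :=
        (ENNReal.mul_iInf (fun h => absurd h hne)).symm
    _ = pn G n u v * pn G n u v * μv noCollision := by rw [← h2]

lemma measure_lastCollisionAt (hdeg : ∀ w : V, 0 < G.degree w) (v u : V)
    {μu μv : Measure (ℕ → V × V)}
    (hμu : IsPairWalkMeasure (step G) u u μu) (hμv : IsPairWalkMeasure (step G) v v μv) :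
    μu (lastCollisionAt v) = ∑' n : ℕ, pn G n u v * pn G n u v * μv noCollision := by
  have hd : (lastCollisionAt v : Set (ℕ → V × V)) = ⋃ n, Alast v n := by
    ext ω
    simp only [lastCollisionAt, Alast, Set.mem_setOf_eq, Set.mem_iUnion]
  have hkey : ∀ i j : ℕ, i < j → Disjoint (Alast v i : Set (ℕ → V × V)) (Alast v j) := by
    intro i j hij
    rw [Set.disjoint_left]
    intro ω hωi hωj
    have h1 := hωi.2 j hij
    have h2 := hωj.1
    rw [h2] at h1
    exact h1 rfl
  have hdisj : Pairwise (Function.onFun Disjoint fun n => (Alast v n : Set (ℕ → V × V))) := by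
    intro i j hij
    rcases hij.lt_or_gt with h | h
    · exact hkey i j h
    · exact (hkey j i h).symm
  rw [hd, measure_iUnion hdisj (fun n => measurable_Alast v n)]
  exact tsum_congr fun n => measure_Alast_eq G hdeg v u n hμu hμv

end final

/-- `Σ_u deg(u) · q_last(u, v) = deg(v) · q_0(v) · Σ_{n ≥ 0} p_{2n}(v, v)`
in the extended nonnegative reals. -/
theorem mass_transport_identity
    [Countable V] [MeasurableSpace V] [DiscreteMeasurableSpace V]
    (G : SimpleGraph V) [G.LocallyFinite]
    (hconn : G.Connected) (hdeg : ∀ v : V, 0 < G.degree v)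
    (μ : V → Measure (ℕ → V × V))
    (hμ : ∀ w : V, IsPairWalkMeasure (step G) w w (μ w))
    (v : V) :
    ∑' u : V, (G.degree u : ℝ≥0∞) * μ u (lastCollisionAt v)
      = (G.degree v : ℝ≥0∞) * μ v noCollision * ∑' n : ℕ, pn G (2 * n) v v := by
  calc ∑' u : V, (G.degree u : ℝ≥0∞) * μ u (lastCollisionAt v)
      = ∑' u : V, ∑' n : ℕ, (G.degree u : ℝ≥0∞) *
          (pn G n u v * pn G n u v * μ v noCollision) := by
        refine tsum_congr fun u => ?_
        rw [measure_lastCollisionAt G hdeg v u (hμ u) (hμ v), ← ENNReal.tsum_mul_left]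
    _ = ∑' n : ℕ, ∑' u : V, (G.degree u : ℝ≥0∞) *
          (pn G n u v * pn G n u v * μ v noCollision) := ENNReal.tsum_comm
    _ = ∑' n : ℕ, (G.degree v : ℝ≥0∞) * pn G (n + n) v v * μ v noCollision := by
        refine tsum_congr fun n => ?_
        calc ∑' u : V, (G.degree u : ℝ≥0∞) *
              (pn G n u v * pn G n u v * μ v noCollision)
            = ∑' u : V, ((G.degree u : ℝ≥0∞) * (pn G n u v * pn G n u v)) *
                μ v noCollision := tsum_congr fun u => by ring
          _ = (∑' u : V, (G.degree u : ℝ≥0∞) * (pn G n u v * pn G n u v)) *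
                μ v noCollision := ENNReal.tsum_mul_right
          _ = (G.degree v : ℝ≥0∞) * pn G (n + n) v v * μ v noCollision := by
                rw [deg_mul_pn_sq G hdeg n v]
    _ = (G.degree v : ℝ≥0∞) * μ v noCollision * ∑' n : ℕ, pn G (2 * n) v v := by
        rw [← ENNReal.tsum_mul_left]
        refine tsum_congr fun n => ?_
        rw [two_mul]
        ring

end CollisionsStmt
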